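/- arXiv:1503.06893 — 5 statements merged into one kernel-verified Lean document; each statement's English description precedes it below -/
import Mathlib

section
/- Let G be a finite abelian group, let E be a standard subspace of l²(G) (the span of {e_g : g ∈ S} for some subset S ⊆ G) and let F be a Fourier subspace of l²(G) (the span of {ê_φ : φ ∈ T} for some subset T of the character group of G). If dim(E) · dim(F) < |G|, then E ∩ F = {0}. -/
/-- `e_g`, the indicator function of `{g}`, as an element of `l²(G) = EuclideanSpace ℂ G`. -/
noncomputable def stdBasisVec {G : Type*} [Fintype G] [DecidableEq G] (g : G) :
    EuclideanSpace ℂ G :=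
  EuclideanSpace.single g (1 : ℂ)

/-- `ê_φ = |G|^{-1/2} · φ`, the normalized character, as an element of `l²(G)`. -/
noncomputable def fourierBasisVec {G : Type*} [CommGroup G] [Fintype G] (φ : G →* ℂ) :
    EuclideanSpace ℂ G :=
  ((Real.sqrt (Fintype.card G))⁻¹ : ℂ) • (WithLp.toLp 2 (⇑φ) : EuclideanSpace ℂ G)

/-- A *standard* subspace of `l²(G)` is the span of `{e_g : g ∈ S}` for some `S ⊆ G`. -/
def IsStandardSubspace {G : Type*} [CommGroup G] [Fintype G] [DecidableEq G]
    (E : Submodule ℂ (EuclideanSpace ℂ G)) : Prop :=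
  ∃ S : Set G, E = Submodule.span ℂ (stdBasisVec '' S)

/-- A *Fourier* subspace of `l²(G)` is the span of `{ê_φ : φ ∈ T}` for some set `T`
of characters of `G` (group homomorphisms of `G` into the unit circle in `ℂ`). -/
def IsFourierSubspace {G : Type*} [CommGroup G] [Fintype G]
    (F : Submodule ℂ (EuclideanSpace ℂ G)) : Prop :=
  ∃ T : Set (G →* ℂ), (∀ φ ∈ T, ∀ g : G, ‖φ g‖ = 1) ∧
    F = Submodule.span ℂ (fourierBasisVec '' T)

set_option linter.unusedSectionVars false

open Finset Complex

section Aux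

variable {G : Type*} [CommGroup G] [Fintype G]

lemma conj_eq_inv_of_norm_one' {z : ℂ} (hz : ‖z‖ = 1) : (starRingEnd ℂ) z = z⁻¹ :=
  (RCLike.inv_eq_conj hz).symm

lemma char_orth (φ ψ : G →* ℂ)
    (hφ : ∀ g, ‖φ g‖ = 1) (hψ : ∀ g, ‖ψ g‖ = 1) :
    ∑ g : G, (starRingEnd ℂ) (φ g) * ψ g =
      if φ = ψ then (Fintype.card G : ℂ) else 0 := by
  split_ifs with hne
  · subst hne
    have : ∀ g : G, (starRingEnd ℂ) (φ g) * φ g = 1 := by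
      intro g
      rw [RCLike.conj_mul, hφ g]
      norm_num
    simp [this]
  · set χ : G → ℂ := fun g => (starRingEnd ℂ) (φ g) * ψ g with hχ
    have hφ0 : ∀ g, φ g ≠ 0 := fun g h => by simpa [h] using hφ g
    have hmul : ∀ a b : G, χ (a * b) = χ a * χ b := by
      intro a b
      simp only [hχ, map_mul]
      ring
    obtain ⟨g₀, hg₀⟩ : ∃ g, φ g ≠ ψ g := by
      by_contra hc
      push_neg at hc
      exact hne (MonoidHom.ext hc)
    have hχg₀ : χ g₀ ≠ 1 := by
      rw [hχ]
      simp only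
      rw [conj_eq_inv_of_norm_one' (hφ g₀)]
      intro h
      rw [inv_mul_eq_one₀ (hφ0 g₀)] at h
      exact hg₀ h
    have key : χ g₀ * ∑ g : G, χ g = ∑ g : G, χ g := by
      rw [Finset.mul_sum]
      exact Fintype.sum_equiv (Equiv.mulLeft g₀) _ _ (fun g => (hmul g₀ g).symm)
    have h0 : (χ g₀ - 1) * ∑ g : G, χ g = 0 := by
      rw [sub_mul, one_mul, key, sub_self]
    rcases mul_eq_zero.mp h0 with h | h
    · exact absurd (sub_eq_zero.mp h) hχg₀
    · exact h

lemma fourier_inner (φ ψ : G →* ℂ)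
    (hφ : ∀ g, ‖φ g‖ = 1) (hψ : ∀ g, ‖ψ g‖ = 1) :
    (inner ℂ (fourierBasisVec φ) (fourierBasisVec ψ) : ℂ) =
      if φ = ψ then 1 else 0 := by
  have hn : (0 : ℝ) < Fintype.card G := Nat.cast_pos.mpr Fintype.card_pos
  rw [fourierBasisVec, fourierBasisVec, inner_smul_left, inner_smul_right]
  have : @inner ℂ (EuclideanSpace ℂ G) _ (WithLp.toLp 2 ⇑φ) (WithLp.toLp 2 ⇑ψ) =
      ∑ g : G, (starRingEnd ℂ) (φ g) * ψ g := by
    simp [PiLp.inner_apply, RCLike.inner_apply]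
    exact Finset.sum_congr rfl fun g _ => mul_comm _ _
  rw [this, char_orth φ ψ hφ hψ]
  have hs : ((Real.sqrt (Fintype.card G) : ℂ))⁻¹ * (Real.sqrt (Fintype.card G) : ℂ)⁻¹
      = ((Fintype.card G : ℂ))⁻¹ := by
    rw [← mul_inv]
    norm_cast
    rw [Real.mul_self_sqrt hn.le]
    norm_num
  split_ifs with hne
  · rw [map_inv₀, Complex.conj_ofReal, ← mul_assoc, hs,
      inv_mul_cancel₀ (by exact_mod_cast hn.ne')]
  · simp

lemma fourier_orthonormal (T : Set (G →* ℂ))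
    (hT : ∀ φ ∈ T, ∀ g : G, ‖φ g‖ = 1) :
    Orthonormal ℂ (fun φ : T => fourierBasisVec (φ : G →* ℂ)) := by
  rw [orthonormal_iff_ite]
  intro i j
  rw [fourier_inner _ _ (hT i i.2) (hT j j.2)]
  by_cases h : (i : G →* ℂ) = j
  · simp [h, Subtype.coe_injective h]
  · rw [if_neg h, if_neg (fun hij : i = j => h (congrArg Subtype.val hij))]

lemma std_span_vanish [DecidableEq G] {S : Set G}
    {f : EuclideanSpace ℂ G} (hf : f ∈ Submodule.span ℂ (stdBasisVec '' S)) :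
    ∀ g ∉ S, f g = 0 := by
  let P : Submodule ℂ (EuclideanSpace ℂ G) :=
  { carrier := {x | ∀ g ∉ S, x g = 0}
    add_mem' := fun {a b} ha hb g hg => by
      show a g + b g = 0
      rw [ha g hg, hb g hg, add_zero]
    zero_mem' := fun g _ => rfl
    smul_mem' := fun c a ha g hg => by
      show c * a g = 0
      rw [ha g hg, mul_zero] }
  have hle : Submodule.span ℂ (stdBasisVec '' S) ≤ P := by
    rw [Submodule.span_le]
    rintro x ⟨g', hg', rfl⟩ g hg
    show stdBasisVec g' g = 0
    rw [stdBasisVec, EuclideanSpace.single_apply, if_neg]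
    rintro rfl
    exact hg hg'
  exact hle hf

lemma std_linearIndependent [DecidableEq G] :
    LinearIndependent ℂ (stdBasisVec (G := G)) := by
  have heq : stdBasisVec (G := G) = ⇑(EuclideanSpace.basisFun G ℂ).toBasis := by
    funext i
    rw [OrthonormalBasis.coe_toBasis, EuclideanSpace.basisFun_apply, stdBasisVec]
  rw [heq]
  exact (EuclideanSpace.basisFun G ℂ).toBasis.linearIndependent

lemma finrank_std_span [DecidableEq G] (S : Set G) :
    Module.finrank ℂ (Submodule.span ℂ (stdBasisVec '' S)) = S.ncard := by
  classical
  have hli0 := std_linearIndependent (G := G)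
  have hset : LinearIndependent ℂ ((↑) : (stdBasisVec '' S) → EuclideanSpace ℂ G) :=
    LinearIndepOn.id_image (v := stdBasisVec) (s := S) (hli0.comp ((↑) : S → G) Subtype.val_injective)
  haveI : Fintype ↥(stdBasisVec '' S) := ((Set.toFinite S).image _).fintype
  rw [finrank_span_set_eq_card hset, ← Set.ncard_eq_toFinset_card',
    Set.ncard_image_of_injective S hli0.injective]

lemma card_le_finrank_fourier (T : Set (G →* ℂ))
    (hT : ∀ φ ∈ T, ∀ g : G, ‖φ g‖ = 1) (t : Finset (G →* ℂ)) (hsub : ↑t ⊆ T) :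
    t.card ≤ Module.finrank ℂ (Submodule.span ℂ (fourierBasisVec '' T)) := by
  classical
  have hON := fourier_orthonormal T hT
  have hliT := hON.linearIndependent
  have hlit : LinearIndependent ℂ (fun x : (↑t : Set (G →* ℂ)) => fourierBasisVec (x : G →* ℂ)) :=
    hliT.comp (Set.inclusion hsub) (Set.inclusion_injective hsub)
  have hset : LinearIndependent ℂ
      ((↑) : (fourierBasisVec '' (↑t : Set (G →* ℂ))) → EuclideanSpace ℂ G) := LinearIndepOn.id_image (v := fourierBasisVec) (s := (↑t : Set (G →* ℂ))) hlit
  haveI : Fintype ↥(fourierBasisVec '' (↑t : Set (G →* ℂ))) := (t.finite_toSet.image _).fintype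
  have hinjF : Function.Injective (fourierBasisVec (G := G)) := by
    intro φ ψ h
    have hc : ((Real.sqrt (Fintype.card G))⁻¹ : ℂ) ≠ 0 := by
      have : (0 : ℝ) < Real.sqrt (Fintype.card G) :=
        Real.sqrt_pos.mpr (Nat.cast_pos.mpr Fintype.card_pos)
      simp [Complex.ofReal_eq_zero, this.ne']
    have h2 : (WithLp.toLp 2 ⇑φ : EuclideanSpace ℂ G) = WithLp.toLp 2 ⇑ψ :=
      smul_right_injective (EuclideanSpace ℂ G) hc h
    exact MonoidHom.ext fun g => congrArg (fun v : EuclideanSpace ℂ G => v g) h2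
  have h1 : Module.finrank ℂ (Submodule.span ℂ (fourierBasisVec '' (↑t : Set (G →* ℂ))))
      = t.card := by
    rw [finrank_span_set_eq_card hset, ← Set.ncard_eq_toFinset_card',
      Set.ncard_image_of_injective _ hinjF, Set.ncard_coe_finset]
  rw [← h1]
  exact Submodule.finrank_mono (Submodule.span_mono (Set.image_mono hsub))

end Aux

/-- If `E` is a standard subspace and `F` a Fourier subspace of `l²(G)` with
`dim E · dim F < |G|`, then `E ∩ F = {0}`. -/
theorem stmt0 {G : Type*} [CommGroup G] [Fintype G] [DecidableEq G]
    (E F : Submodule ℂ (EuclideanSpace ℂ G))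
    (hE : IsStandardSubspace E) (hF : IsFourierSubspace F)
    (h : Module.finrank ℂ E * Module.finrank ℂ F < Fintype.card G) :
    E ⊓ F = ⊥ := by
  classical
  obtain ⟨S, hES⟩ := hE
  obtain ⟨T, hTnorm, hFT⟩ := hF
  rw [eq_bot_iff]
  intro f hfmem
  obtain ⟨hfE, hfF⟩ := Submodule.mem_inf.mp hfmem
  rw [Submodule.mem_bot]
  by_contra hf0
  set n := Fintype.card G with hn
  have hnpos : (0 : ℝ) < n := Nat.cast_pos.mpr Fintype.card_pos
  have hsqrt : (0 : ℝ) < Real.sqrt n := Real.sqrt_pos.mpr hnpos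
  have hsupp : ∀ g ∉ S, f g = 0 := std_span_vanish (hES ▸ hfE)
  rw [hFT, Finsupp.mem_span_image_iff_linearCombination] at hfF
  obtain ⟨l, hl, hfl⟩ := hfF
  rw [Finsupp.mem_supported] at hl
  set t := l.support with ht
  have hf_eq : f = ∑ φ ∈ t, l φ • fourierBasisVec φ := by
    rw [← hfl, Finsupp.linearCombination_apply, Finsupp.sum]
  set L : ℝ := ∑ φ ∈ t, ‖l φ‖ ^ 2 with hL
  -- Parseval
  have hON := fourier_orthonormal T hTnorm
  have hsub_eq : ∑ x ∈ t.subtype (· ∈ T), l ↑x • fourierBasisVec (x : G →* ℂ)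
      = ∑ φ ∈ t, l φ • fourierBasisVec φ :=
    Finset.sum_subtype_of_mem (fun φ => l φ • fourierBasisVec φ) (fun x hx => hl hx)
  have hPar : ‖f‖ ^ 2 = L := by
    have h1 : (inner ℂ f f : ℂ) = ∑ x ∈ t.subtype (· ∈ T),
        (starRingEnd ℂ) (l ↑x) * l ↑x := by
      rw [hf_eq, ← hsub_eq]
      exact hON.inner_sum (fun x => l ↑x) (fun x => l ↑x) _
    have h2 : (inner ℂ f f : ℂ) = ((L : ℝ) : ℂ) := by
      rw [h1, Finset.sum_subtype_of_mem (fun φ => (starRingEnd ℂ) (l φ) * l φ) (fun x hx => hl hx), hL]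
      push_cast
      refine Finset.sum_congr rfl fun φ _ => ?_
      rw [RCLike.conj_mul]
      norm_cast
    have h3 : (inner ℂ f f : ℂ) = ((‖f‖ : ℝ) : ℂ) ^ 2 := inner_self_eq_norm_sq_to_K f
    have := h2.symm.trans h3
    exact_mod_cast this.symm
  have hLpos : 0 < L := by
    rw [← hPar]
    have : 0 < ‖f‖ := norm_pos_iff.mpr hf0
    positivity
  -- pointwise bound
  have hfg : ∀ g : G, f g = ∑ φ ∈ t, l φ * (((Real.sqrt n : ℝ) : ℂ)⁻¹ * φ g) := by
    intro g
    rw [hf_eq]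
    have h2 : (∑ φ ∈ t, l φ • fourierBasisVec φ) g
        = ∑ φ ∈ t, (l φ • fourierBasisVec φ) g := by rw [WithLp.ofLp_sum, Finset.sum_apply]
    rw [h2]
    exact Finset.sum_congr rfl fun φ _ => by simp [fourierBasisVec, hn]
  have hbound : ∀ g : G, ‖f g‖ ^ 2 ≤ t.card * L / n := by
    intro g
    have h1 : ‖f g‖ ≤ (Real.sqrt n)⁻¹ * ∑ φ ∈ t, ‖l φ‖ := by
      rw [hfg g, Finset.mul_sum]
      refine (norm_sum_le _ _).trans (Finset.sum_le_sum fun φ hφ => ?_)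
      rw [norm_mul, norm_mul, norm_inv, Complex.norm_real, Real.norm_eq_abs,
        abs_of_pos hsqrt, hTnorm φ (hl hφ) g, mul_one, mul_comm]
    have h2 : (∑ φ ∈ t, ‖l φ‖) ^ 2 ≤ t.card * L := by
      simpa [hL] using sq_sum_le_card_mul_sum_sq (s := t) (f := fun φ => ‖l φ‖)
    have h3 : ‖f g‖ ^ 2 ≤ ((Real.sqrt n)⁻¹ * ∑ φ ∈ t, ‖l φ‖) ^ 2 :=
      pow_le_pow_left₀ (norm_nonneg _) h1 2
    have h4 : ((Real.sqrt n)⁻¹ * ∑ φ ∈ t, ‖l φ‖) ^ 2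
        = (∑ φ ∈ t, ‖l φ‖) ^ 2 / n := by
      rw [mul_pow, inv_pow, Real.sq_sqrt hnpos.le]
      ring
    calc ‖f g‖ ^ 2 ≤ (∑ φ ∈ t, ‖l φ‖) ^ 2 / n := by rw [← h4]; exact h3
      _ ≤ t.card * L / n := by gcongr
  -- sum over the support S
  have hnorm2 : ‖f‖ ^ 2 = ∑ g : G, ‖f g‖ ^ 2 := by
    rw [EuclideanSpace.norm_eq, Real.sq_sqrt (Finset.sum_nonneg fun g _ => sq_nonneg _)]
  have hsum_eq : ∑ g : G, ‖f g‖ ^ 2 = ∑ g ∈ S.toFinset, ‖f g‖ ^ 2 := by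
    refine (Finset.sum_subset S.toFinset.subset_univ fun g _ hg => ?_).symm
    rw [hsupp g (by simpa using hg), norm_zero]
    norm_num
  have hsum_le : ∑ g ∈ S.toFinset, ‖f g‖ ^ 2 ≤ S.toFinset.card * (t.card * L / n) := by
    have := Finset.sum_le_card_nsmul S.toFinset (fun g => ‖f g‖ ^ 2) (t.card * L / n)
      (fun g _ => hbound g)
    simpa [nsmul_eq_mul] using this
  -- rank bounds
  have hSr : (S.toFinset.card : ℕ) = Module.finrank ℂ E := by
    rw [hES, finrank_std_span, Set.ncard_eq_toFinset_card']
  have htr : t.card ≤ Module.finrank ℂ F := by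
    rw [hFT]
    exact card_le_finrank_fourier T hTnorm t hl
  have hcard : (S.toFinset.card * t.card : ℝ) < n := by
    have h5 : S.toFinset.card * t.card ≤ Module.finrank ℂ E * Module.finrank ℂ F :=
      Nat.mul_le_mul (le_of_eq hSr) htr
    exact_mod_cast lt_of_le_of_lt h5 h
  have hfin : L ≤ (S.toFinset.card * t.card / n) * L := by
    have := hsum_le
    rw [← hsum_eq, ← hnorm2, hPar] at this
    calc L ≤ S.toFinset.card * (t.card * L / n) := this
      _ = (S.toFinset.card * t.card / n) * L := by ring
  have hq : (S.toFinset.card * t.card / n : ℝ) < 1 := (div_lt_one hnpos).mpr hcard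
  nlinarith [hfin, hLpos, mul_lt_mul_of_pos_right hq hLpos]
end

section
/- Let A be a positive semidefinite operator on ℂ^m, let a, δ > 0 with ‖A‖ < a, and let v ∈ ℂ^m. Define the upper potential Φ^a(A) = Tr((aI − A)^{-1}). If ⟨((a+δ)I − A)^{-2} v, v⟩ / (Φ^a(A) − Φ^{a+δ}(A)) + ⟨((a+δ)I − A)^{-1} v, v⟩ ≤ 1, then ‖A + vv*‖ < a + δ and Φ^{a+δ}(A + vv*) ≤ Φ^a(A). -/
open scoped ComplexOrder Matrix

set_option maxHeartbeats 1600000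

/-- The *upper potential* `Φ^a(A) = Tr((aI - A)⁻¹)` of an operator `A` on `ℂ^m`
(represented as an `m × m` complex matrix). -/
noncomputable def upperPotential {m : ℕ} (a : ℝ) (A : Matrix (Fin m) (Fin m) ℂ) : ℂ :=
  (((a : ℂ) • (1 : Matrix (Fin m) (Fin m) ℂ) - A)⁻¹).trace

namespace BarrierAux

open Matrix

variable {k : ℕ}

open scoped MatrixOrder in
lemma exists_sqrt' {S : Matrix (Fin k) (Fin k) ℂ} (hS : S.PosSemidef) :
    ∃ R : Matrix (Fin k) (Fin k) ℂ, R * R = S ∧ Rᴴ = R :=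
  ⟨CFC.sqrt S, CFC.sqrt_mul_sqrt_self S hS.nonneg, (CFC.sqrt_nonneg S).posSemidef.1⟩

lemma inner_equiv_symm' (x y : Fin k → ℂ) :
    inner ℂ ((WithLp.equiv 2 (Fin k → ℂ)).symm x) ((WithLp.equiv 2 (Fin k → ℂ)).symm y)
      = star x ⬝ᵥ y := by
  rw [WithLp.equiv_symm_apply, EuclideanSpace.inner_toLp_toLp, dotProduct_comm]

/- ### generalities about the complex order -/

lemma exists_real_of_nonneg {z : ℂ} (h : 0 ≤ z) : ∃ r : ℝ, 0 ≤ r ∧ z = (r : ℂ) := by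
  obtain ⟨h1, h2⟩ := Complex.le_def.mp h
  exact ⟨z.re, by simpa using h1, by apply Complex.ext <;> simp [← h2]⟩

lemma exists_real_of_pos {z : ℂ} (h : 0 < z) : ∃ r : ℝ, 0 < r ∧ z = (r : ℂ) := by
  obtain ⟨h1, h2⟩ := Complex.lt_def.mp h
  exact ⟨z.re, by simpa using h1, by apply Complex.ext <;> simp [← h2]⟩

/- ### small vec/matrix computation lemmas -/

lemma vecMulVec_mulVec (u w x : Fin k → ℂ) : vecMulVec u w *ᵥ x = (w ⬝ᵥ x) • u := by
  ext i; simp [vecMulVec, mulVec, dotProduct, Finset.mul_sum, mul_assoc, mul_comm, mul_left_comm]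

lemma mul_vecMulVec (X : Matrix (Fin k) (Fin k) ℂ) (u w : Fin k → ℂ) :
    X * vecMulVec u w = vecMulVec (X *ᵥ u) w := by
  ext i j; simp [vecMulVec_apply, mul_apply, mulVec, dotProduct, Finset.sum_mul, mul_assoc]

lemma vecMulVec_mul (X : Matrix (Fin k) (Fin k) ℂ) (u w : Fin k → ℂ) :
    vecMulVec u w * X = vecMulVec u (w ᵥ* X) := by
  ext i j; simp [vecMulVec_apply, mul_apply, vecMul, dotProduct, Finset.mul_sum, mul_assoc]

lemma vecMulVec_smul_left (c : ℂ) (u w : Fin k → ℂ) :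
    vecMulVec (c • u) w = c • vecMulVec u w := by
  ext i j; simp [vecMulVec_apply, mul_assoc]

lemma trace_vecMulVec (u w : Fin k → ℂ) : (vecMulVec u w).trace = w ⬝ᵥ u := by
  simp [Matrix.trace, Matrix.diag, vecMulVec_apply, dotProduct, mul_comm]

lemma star_dot (u x : Fin k → ℂ) : star x ⬝ᵥ u = star (star u ⬝ᵥ x) := by
  simp [dotProduct, mul_comm]

lemma vecMulVec_posSemidef (v : Fin k → ℂ) : (vecMulVec v (star v)).PosSemidef := by
  refine PosSemidef.of_dotProduct_mulVec_nonneg ?_ ?_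
  · ext i j; simp [conjTranspose_apply, vecMulVec_apply, mul_comm]
  · intro x
    rw [BarrierAux.vecMulVec_mulVec, dotProduct_smul, smul_eq_mul, star_dot v x]
    exact mul_star_self_nonneg ((star v) ⬝ᵥ x : ℂ)

/- ### trace positivity -/

lemma trace_pos (hk : 0 < k) {M : Matrix (Fin k) (Fin k) ℂ} (hM : M.PosDef) : 0 < M.trace := by
  have h : ∀ i, 0 < M i i := by
    intro i
    have := hM.dotProduct_mulVec_pos (x := Pi.single i 1) (by
      intro h
      simpa using congrFun h i)
    simpa [mulVec_single, dotProduct, Pi.single_apply] using this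
  rw [Matrix.trace]
  exact Finset.sum_pos (fun i _ => h i) ⟨⟨0, hk⟩, Finset.mem_univ _⟩

lemma posDef_conj {M N : Matrix (Fin k) (Fin k) ℂ} (hM : M.PosDef) (hN : IsUnit N) :
    (Nᴴ * M * N).PosDef := by
  refine PosDef.of_dotProduct_mulVec_pos (isHermitian_conjTranspose_mul_mul N hM.1) fun x hx => ?_
  have hinj : Function.Injective (N.mulVec) := mulVec_injective_iff_isUnit.mpr hN
  have hNx : N *ᵥ x ≠ 0 := by
    intro h; exact hx (hinj (by simpa using h))
  simpa only [star_mulVec, dotProduct_mulVec, vecMul_vecMul] using hM.dotProduct_mulVec_pos hNx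

lemma trace_mul_pos (hk : 0 < k) {X Y : Matrix (Fin k) (Fin k) ℂ}
    (hX : X.PosDef) (hY : Y.PosDef) : 0 < (X * Y).trace := by
  obtain ⟨R, hRR, hRH⟩ := exists_sqrt' hY.posSemidef
  have hRdet : IsUnit R.det := by
    have hdet : R.det * R.det = Y.det := by rw [← Matrix.det_mul, hRR]
    have hY0 : Y.det ≠ 0 := hY.det_pos.ne'
    have hR0 : R.det ≠ 0 := fun h => hY0 (by rw [← hdet, h, zero_mul])
    exact isUnit_iff_ne_zero.mpr hR0
  have hconj : (Rᴴ * X * R).PosDef := posDef_conj hX ((Matrix.isUnit_iff_isUnit_det _).mpr hRdet)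
  have htr : (X * Y).trace = (Rᴴ * X * R).trace := by
    rw [hRH, ← hRR, ← Matrix.mul_assoc, Matrix.trace_mul_cycle]
  rw [htr]
  exact trace_pos hk hconj

/- ### bridging between matrices and the Euclidean CLM -/

lemma clm_apply (S : Matrix (Fin k) (Fin k) ℂ) (y : Fin k → ℂ) :
    Matrix.toEuclideanCLM (𝕜 := ℂ) S ((WithLp.equiv 2 (Fin k → ℂ)).symm y)
      = (WithLp.equiv 2 (Fin k → ℂ)).symm (S *ᵥ y) := by
  rfl

lemma dot_star_self (y : Fin k → ℂ) :
    star y ⬝ᵥ y = ((‖(WithLp.equiv 2 (Fin k → ℂ)).symm y‖ ^ 2 : ℝ) : ℂ) := by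
  rw [← inner_equiv_symm', inner_self_eq_norm_sq_to_K]
  norm_cast

lemma exists_norm_attained (hk : 0 < k)
    (T : EuclideanSpace ℂ (Fin k) →L[ℂ] EuclideanSpace ℂ (Fin k)) :
    ∃ x : EuclideanSpace ℂ (Fin k), ‖x‖ = 1 ∧ ‖T‖ = ‖T x‖ := by
  haveI : Nonempty (Fin k) := ⟨⟨0, hk⟩⟩
  haveI : Nontrivial (EuclideanSpace ℂ (Fin k)) := by
    refine ⟨(WithLp.equiv 2 (Fin k → ℂ)).symm (fun _ => 1), 0, fun h => ?_⟩
    have := congrFun (congrArg (WithLp.equiv 2 (Fin k → ℂ)) h) ⟨0, hk⟩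
    simpa using this
  obtain ⟨x, hxs, hmax⟩ := (isCompact_sphere (0 : EuclideanSpace ℂ (Fin k)) 1).exists_isMaxOn
    (NormedSpace.sphere_nonempty.mpr zero_le_one) (T.continuous.norm.continuousOn)
  have hx1 : ‖x‖ = 1 := by simpa using hxs
  refine ⟨x, hx1, le_antisymm ?_ ?_⟩
  · refine T.opNorm_le_bound (norm_nonneg _) fun y => ?_
    rcases eq_or_ne y 0 with rfl | hy
    · simp
    · have hy0 : (0 : ℝ) < ‖y‖ := norm_pos_iff.mpr hy
      have hnc : ‖((‖y‖⁻¹ : ℝ) : ℂ)‖ = ‖y‖⁻¹ := by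
        rw [Complex.norm_real, Real.norm_eq_abs, abs_of_pos (inv_pos.mpr hy0)]
      have hu : ‖((‖y‖⁻¹ : ℝ) : ℂ) • y‖ = 1 := by
        rw [norm_smul, hnc, inv_mul_cancel₀ hy0.ne']
      have husph : ((‖y‖⁻¹ : ℝ) : ℂ) • y ∈ Metric.sphere (0 : EuclideanSpace ℂ (Fin k)) 1 := by
        simpa [mem_sphere_zero_iff_norm] using hu
      have hle : ‖T (((‖y‖⁻¹ : ℝ) : ℂ) • y)‖ ≤ ‖T x‖ := hmax husph
      rw [_root_.map_smul, norm_smul, hnc] at hle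
      calc ‖T y‖ = ‖y‖ * (‖y‖⁻¹ * ‖T y‖) := by
            rw [← mul_assoc, mul_inv_cancel₀ hy0.ne', one_mul]
        _ ≤ ‖y‖ * ‖T x‖ := mul_le_mul_of_nonneg_left hle hy0.le
        _ = ‖T x‖ * ‖y‖ := mul_comm _ _
  · simpa [hx1] using T.le_opNorm x

/- ### norm of a PSD matrix vs. positive definiteness of `c•1 - S` -/

lemma posDef_of_norm_lt {S : Matrix (Fin k) (Fin k) ℂ} (hS : S.PosSemidef) {c : ℝ}
    (h : ‖Matrix.toEuclideanCLM (𝕜 := ℂ) S‖ < c) :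
    ((c : ℂ) • (1 : Matrix (Fin k) (Fin k) ℂ) - S).PosDef := by
  have hherm : ((c : ℂ) • (1 : Matrix (Fin k) (Fin k) ℂ) - S).IsHermitian := by
    refine IsHermitian.sub ?_ hS.1
    simp [Matrix.IsHermitian, conjTranspose_smul, Complex.conj_ofReal]
  refine PosDef.of_dotProduct_mulVec_pos hherm fun x hx => ?_
  set X := (WithLp.equiv 2 (Fin k → ℂ)).symm x with hXdef
  have hX0 : X ≠ 0 := by
    intro h0
    exact hx (by simpa [hXdef] using congrArg (WithLp.equiv 2 (Fin k → ℂ)) h0)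
  have hXpos : (0 : ℝ) < ‖X‖ := norm_pos_iff.mpr hX0
  obtain ⟨q, hq0, hqe⟩ := exists_real_of_nonneg (hS.dotProduct_mulVec_nonneg x)
  have hinner : star x ⬝ᵥ S *ᵥ x = inner ℂ X (Matrix.toEuclideanCLM (𝕜 := ℂ) S X) := by
    rw [hXdef, clm_apply, inner_equiv_symm']
  have hb : ‖(inner ℂ X (Matrix.toEuclideanCLM (𝕜 := ℂ) S X) : ℂ)‖ ≤
      ‖Matrix.toEuclideanCLM (𝕜 := ℂ) S‖ * ‖X‖ ^ 2 := by
    calc ‖(inner ℂ X (Matrix.toEuclideanCLM (𝕜 := ℂ) S X) : ℂ)‖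
        ≤ ‖X‖ * ‖Matrix.toEuclideanCLM (𝕜 := ℂ) S X‖ := norm_inner_le_norm _ _
      _ ≤ ‖X‖ * (‖Matrix.toEuclideanCLM (𝕜 := ℂ) S‖ * ‖X‖) :=
          mul_le_mul_of_nonneg_left ((Matrix.toEuclideanCLM (𝕜 := ℂ) S).le_opNorm X)
            (norm_nonneg _)
      _ = ‖Matrix.toEuclideanCLM (𝕜 := ℂ) S‖ * ‖X‖ ^ 2 := by ring
  have hqlt : q < c * ‖X‖ ^ 2 := by
    have h1 : q ≤ ‖(inner ℂ X (Matrix.toEuclideanCLM (𝕜 := ℂ) S X) : ℂ)‖ := by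
      rw [← hinner, hqe]
      simpa [Complex.norm_real, Real.norm_eq_abs] using le_abs_self q
    have h2 : ‖Matrix.toEuclideanCLM (𝕜 := ℂ) S‖ * ‖X‖ ^ 2 < c * ‖X‖ ^ 2 := by
      have := mul_lt_mul_of_pos_right h (by positivity : (0:ℝ) < ‖X‖ ^ 2)
      linarith
    linarith [le_trans h1 hb]
  have hdot1 : star x ⬝ᵥ x = ((‖X‖ ^ 2 : ℝ) : ℂ) := dot_star_self x
  have hform : star x ⬝ᵥ ((c : ℂ) • (1 : Matrix (Fin k) (Fin k) ℂ) - S) *ᵥ x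
      = ((c * ‖X‖ ^ 2 - q : ℝ) : ℂ) := by
    rw [sub_mulVec, dotProduct_sub, smul_mulVec, one_mulVec, dotProduct_smul, hdot1, hqe,
      smul_eq_mul]
    push_cast
    ring
  rw [hform]
  have hpos : (0:ℝ) < c * ‖X‖ ^ 2 - q := by linarith
  exact_mod_cast Complex.real_lt_real.mpr hpos

lemma norm_lt_of_posDef {S : Matrix (Fin k) (Fin k) ℂ} (hS : S.PosSemidef)
    {c : ℝ} (hc : 0 < c)
    (hPD : ((c : ℂ) • (1 : Matrix (Fin k) (Fin k) ℂ) - S).PosDef) :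
    ‖Matrix.toEuclideanCLM (𝕜 := ℂ) S‖ < c := by
  rcases Nat.eq_zero_or_pos k with rfl | hk
  · have h0 : Matrix.toEuclideanCLM (𝕜 := ℂ) S = 0 := by
      ext z i
      exact Fin.elim0 i
    rw [h0, norm_zero]; exact hc
  obtain ⟨x, hx1, hTx⟩ := exists_norm_attained hk (Matrix.toEuclideanCLM (𝕜 := ℂ) S)
  set y := WithLp.equiv 2 (Fin k → ℂ) x with hy
  have hxy : x = (WithLp.equiv 2 (Fin k → ℂ)).symm y := rfl
  have hTx2 : ((‖Matrix.toEuclideanCLM (𝕜 := ℂ) S x‖ ^ 2 : ℝ) : ℂ)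
      = star y ⬝ᵥ (S * S) *ᵥ y := by
    rw [hxy, clm_apply, ← dot_star_self, star_mulVec, hS.1.eq, ← dotProduct_mulVec,
      mulVec_mulVec]
  obtain ⟨R, hRR, hRH⟩ := exists_sqrt' hS
  have hps : ((c : ℂ) • S - S * S).PosSemidef := by
    have h1 := hPD.posSemidef.conjTranspose_mul_mul_same R
    have e : R * S * R = S * S := by
      rw [← hRR]
      noncomm_ring
    have h2 : Rᴴ * ((c : ℂ) • (1 : Matrix (Fin k) (Fin k) ℂ) - S) * R
        = (c : ℂ) • S - S * S := by
      rw [hRH, Matrix.mul_sub, Matrix.sub_mul, Matrix.mul_smul, Matrix.mul_one,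
        Matrix.smul_mul, hRR, e]
    rwa [h2] at h1
  have key1 : star y ⬝ᵥ (S * S) *ᵥ y ≤ (c : ℂ) * (star y ⬝ᵥ S *ᵥ y) := by
    have := hps.dotProduct_mulVec_nonneg y
    rw [sub_mulVec, dotProduct_sub, smul_mulVec, dotProduct_smul] at this
    rw [← sub_nonneg]
    simpa using this
  have hy1 : star y ⬝ᵥ y = 1 := by
    rw [dot_star_self, ← hxy, hx1]
    norm_num
  have hyne : y ≠ 0 := by
    intro h0
    rw [h0] at hy1
    simp at hy1
  have key2 : star y ⬝ᵥ S *ᵥ y < (c : ℂ) := by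
    have := hPD.dotProduct_mulVec_pos hyne
    rw [sub_mulVec, dotProduct_sub, smul_mulVec, one_mulVec, dotProduct_smul, hy1] at this
    rw [← sub_pos]
    simpa using this
  have key3 : ((‖Matrix.toEuclideanCLM (𝕜 := ℂ) S x‖ ^ 2 : ℝ) : ℂ) < ((c ^ 2 : ℝ) : ℂ) := by
    rw [hTx2]
    calc star y ⬝ᵥ (S * S) *ᵥ y ≤ (c : ℂ) * (star y ⬝ᵥ S *ᵥ y) := key1
      _ < (c : ℂ) * (c : ℂ) := by
          refine mul_lt_mul_of_pos_left key2 ?_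
          exact_mod_cast Complex.real_lt_real.mpr hc
      _ = ((c ^ 2 : ℝ) : ℂ) := by push_cast; ring
  have key4 : ‖Matrix.toEuclideanCLM (𝕜 := ℂ) S x‖ ^ 2 < c ^ 2 :=
    Complex.real_lt_real.mp key3
  rw [hTx]
  exact lt_of_pow_lt_pow_left₀ 2 hc.le key4

end BarrierAux

open BarrierAux Matrix in
/-- Srivastava's barrier lemma: if `A ⪰ 0` on `ℂ^m`, `a, δ > 0`, `‖A‖ < a`, `v ∈ ℂ^m`, and
`⟨((a+δ)I - A)⁻² v, v⟩ / (Φ^a(A) - Φ^{a+δ}(A)) + ⟨((a+δ)I - A)⁻¹ v, v⟩ ≤ 1`,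
then `‖A + vv*‖ < a + δ` and `Φ^{a+δ}(A + vv*) ≤ Φ^a(A)`. -/
theorem stmt7 {m : ℕ} (A : Matrix (Fin m) (Fin m) ℂ) (hA : A.PosSemidef)
    (a δ : ℝ) (ha : 0 < a) (hδ : 0 < δ)
    (hnorm : ‖Matrix.toEuclideanCLM (𝕜 := ℂ) A‖ < a)
    (v : Fin m → ℂ)
    (hv : ((((((a + δ : ℝ) : ℂ) • (1 : Matrix (Fin m) (Fin m) ℂ) - A)⁻¹ ^ 2).mulVec v) ⬝ᵥ
            star v) / (upperPotential a A - upperPotential (a + δ) A)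
        + (((((a + δ : ℝ) : ℂ) • (1 : Matrix (Fin m) (Fin m) ℂ) - A)⁻¹).mulVec v) ⬝ᵥ
            star v ≤ 1) :
    ‖Matrix.toEuclideanCLM (𝕜 := ℂ) (A + Matrix.vecMulVec v (star v))‖ < a + δ ∧
    upperPotential (a + δ) (A + Matrix.vecMulVec v (star v)) ≤ upperPotential a A := by
  classical
  rcases Nat.eq_zero_or_pos m with rfl | hm
  · constructor
    · have h0 : Matrix.toEuclideanCLM (𝕜 := ℂ) (A + Matrix.vecMulVec v (star v)) = 0 := by
        ext z i
        exact Fin.elim0 i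
      rw [h0, norm_zero]; positivity
    · simp [upperPotential, Matrix.trace]
  haveI : Nonempty (Fin m) := ⟨⟨0, hm⟩⟩
  set W := Matrix.vecMulVec v (star v) with hWdef
  set B := (((a + δ : ℝ) : ℂ) • (1 : Matrix (Fin m) (Fin m) ℂ) - A) with hBdef
  set M := ((a : ℂ) • (1 : Matrix (Fin m) (Fin m) ℂ) - A) with hMdef
  have hWpsd : W.PosSemidef := vecMulVec_posSemidef v
  have hMpd : M.PosDef := posDef_of_norm_lt hA hnorm
  have hBpd : B.PosDef := posDef_of_norm_lt hA (lt_of_lt_of_le hnorm (by linarith))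
  have hBdet : IsUnit B.det := (Matrix.isUnit_iff_isUnit_det _).mp hBpd.isUnit
  have hMdet : IsUnit M.det := (Matrix.isUnit_iff_isUnit_det _).mp hMpd.isUnit
  have hBB : B * B⁻¹ = 1 := Matrix.mul_nonsing_inv _ hBdet
  have hMM' : M⁻¹ * M = 1 := Matrix.nonsing_inv_mul _ hMdet
  have hBinvH : B⁻¹ᴴ = B⁻¹ := hBpd.inv.isHermitian
  -- the basic scalar quantities
  have hα0 : 0 ≤ star v ⬝ᵥ B⁻¹ *ᵥ v := hBpd.inv.posSemidef.dotProduct_mulVec_nonneg v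
  obtain ⟨αr, hαr0, hαre⟩ := exists_real_of_nonneg hα0
  have hB2psd : (B⁻¹ ^ 2).PosSemidef := hBpd.inv.posSemidef.pow 2
  have hβ0 : 0 ≤ star v ⬝ᵥ (B⁻¹ ^ 2) *ᵥ v := hB2psd.dotProduct_mulVec_nonneg v
  obtain ⟨βr, hβr0, hβre⟩ := exists_real_of_nonneg hβ0
  -- the potential gap is positive
  have hdiffBM : M⁻¹ - B⁻¹ = (δ : ℂ) • (M⁻¹ * B⁻¹) := by
    have h1 : B - M = (δ : ℂ) • (1 : Matrix (Fin m) (Fin m) ℂ) := by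
      rw [hBdef, hMdef]
      push_cast
      module
    have h2 : M⁻¹ * (B - M) * B⁻¹ = M⁻¹ - B⁻¹ := by
      rw [Matrix.mul_sub, Matrix.sub_mul, Matrix.mul_assoc, hBB, Matrix.mul_one, hMM', one_mul]
    rw [← h2, h1, Matrix.mul_smul, Matrix.mul_one, Matrix.smul_mul]
  have hgap : 0 < M⁻¹.trace - B⁻¹.trace := by
    have h3 : M⁻¹.trace - B⁻¹.trace = (δ : ℂ) * (M⁻¹ * B⁻¹).trace := by
      rw [← Matrix.trace_sub, hdiffBM, Matrix.trace_smul, smul_eq_mul]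
    rw [h3]
    refine mul_pos ?_ (trace_mul_pos hm hMpd.inv hBpd.inv)
    exact_mod_cast Complex.real_lt_real.mpr hδ
  obtain ⟨Δr, hΔr0, hΔre⟩ := exists_real_of_pos hgap
  -- translate `hv` to the reals
  have hUP : upperPotential a A - upperPotential (a + δ) A = M⁻¹.trace - B⁻¹.trace := rfl
  have hv' : βr / Δr + αr ≤ 1 := by
    rw [hUP, hΔre, dotProduct_comm _ (star v), dotProduct_comm _ (star v),
      hαre, hβre] at hv
    refine Complex.real_le_real.mp ?_
    push_cast
    exact hv
  -- αr < 1
  have hα1 : αr < 1 := by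
    by_contra hcon
    push_neg at hcon
    have h1 : βr / Δr ≤ 0 := by linarith
    have h2 : 0 ≤ βr / Δr := div_nonneg hβr0 hΔr0.le
    have hβr : βr = 0 := by
      rcases div_eq_zero_iff.mp (le_antisymm h1 h2) with h | h
      · exact h
      · exact absurd h hΔr0.ne'
    have hβz : star v ⬝ᵥ (B⁻¹ ^ 2) *ᵥ v = 0 := by rw [hβre, hβr]; simp
    have hvz2 : (B⁻¹ ^ 2) *ᵥ v = 0 := (hB2psd.dotProduct_mulVec_zero_iff v).mp hβz
    have hvz : v = 0 := by
      have h4 : ((B * B) * (B⁻¹ ^ 2)) *ᵥ v = 0 := by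
        rw [← Matrix.mulVec_mulVec, hvz2, Matrix.mulVec_zero]
      have h5 : (B * B) * (B⁻¹ ^ 2) = 1 := by
        rw [pow_two, Matrix.mul_assoc, ← Matrix.mul_assoc B B⁻¹ B⁻¹, hBB, Matrix.one_mul, hBB]
      rwa [h5, Matrix.one_mulVec] at h4
    have hz : αr = 0 := by
      have : ((αr : ℝ) : ℂ) = 0 := by rw [← hαre, hvz]; simp
      exact_mod_cast this
    linarith
  have hcr0 : 0 < 1 - αr := by linarith
  have hkey : βr ≤ (1 - αr) * Δr := by
    have h1 : βr / Δr ≤ 1 - αr := by linarith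
    calc βr = (βr / Δr) * Δr := by field_simp
      _ ≤ (1 - αr) * Δr := mul_le_mul_of_nonneg_right h1 hΔr0.le
  -- positive definiteness of B - W
  have hBW : (B - W).PosDef := by
    refine PosDef.of_dotProduct_mulVec_pos (hBpd.1.sub hWpsd.1) fun x hx => ?_
    set w := B⁻¹ *ᵥ v with hwdef
    have hvBw : B *ᵥ w = v := by
      rw [hwdef, Matrix.mulVec_mulVec, hBB, Matrix.one_mulVec]
    obtain ⟨R, hRR, hRH⟩ := exists_sqrt' hBpd.posSemidef
    have key : ∀ y z : Fin m → ℂ, star (R *ᵥ y) ⬝ᵥ (R *ᵥ z) = star y ⬝ᵥ B *ᵥ z := by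
      intro y z
      rw [Matrix.star_mulVec, hRH, ← Matrix.dotProduct_mulVec, Matrix.mulVec_mulVec, hRR]
    set p := (WithLp.equiv 2 (Fin m → ℂ)).symm (R *ᵥ w) with hpdef
    set q := (WithLp.equiv 2 (Fin m → ℂ)).symm (R *ᵥ x) with hqdef
    have hip : ∀ y z : Fin m → ℂ,
        (inner ℂ ((WithLp.equiv 2 (Fin m → ℂ)).symm (R *ᵥ y))
            ((WithLp.equiv 2 (Fin m → ℂ)).symm (R *ᵥ z)) : ℂ) = star y ⬝ᵥ B *ᵥ z := by
      intro y z
      rw [inner_equiv_symm']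
      exact key y z
    have hwv : star w ⬝ᵥ v = ((αr : ℝ) : ℂ) := by
      rw [hwdef, Matrix.star_mulVec, hBinvH, ← Matrix.dotProduct_mulVec, ← hαre]
    have hpn : (‖p‖ : ℝ) ^ 2 = αr := by
      have h1 : (inner ℂ p p : ℂ) = ((αr : ℝ) : ℂ) := by
        rw [hpdef, hip w w, hvBw, hwv]
      rw [inner_self_eq_norm_sq_to_K] at h1
      have h2 := congrArg Complex.re h1
      simpa [← Complex.ofReal_pow] using h2
    obtain ⟨sr, hsr0, hsre⟩ := exists_real_of_pos (hBpd.dotProduct_mulVec_pos hx)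
    have hqn : (‖q‖ : ℝ) ^ 2 = sr := by
      have h1 : (inner ℂ q q : ℂ) = ((sr : ℝ) : ℂ) := by
        rw [hqdef, hip x x, ← hsre]
      rw [inner_self_eq_norm_sq_to_K] at h1
      have h2 := congrArg Complex.re h1
      simpa [← Complex.ofReal_pow] using h2
    have ht : star v ⬝ᵥ x = (inner ℂ p q : ℂ) := by
      rw [hpdef, hqdef, hip w x, ← hvBw, Matrix.star_mulVec, hBpd.1.eq,
        ← Matrix.dotProduct_mulVec]
    have hcs : ‖(star v ⬝ᵥ x : ℂ)‖ ^ 2 ≤ αr * sr := by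
      rw [ht]
      calc ‖(inner ℂ p q : ℂ)‖ ^ 2 ≤ (‖p‖ * ‖q‖) ^ 2 :=
            pow_le_pow_left₀ (norm_nonneg _) (norm_inner_le_norm (𝕜 := ℂ) p q) 2
        _ = αr * sr := by rw [mul_pow, hpn, hqn]
    have hWx : star x ⬝ᵥ W *ᵥ x = ((‖(star v ⬝ᵥ x : ℂ)‖ ^ 2 : ℝ) : ℂ) := by
      rw [hWdef, BarrierAux.vecMulVec_mulVec, dotProduct_smul, smul_eq_mul, star_dot v x,
        show star ((star v) ⬝ᵥ x : ℂ) = (starRingEnd ℂ) ((star v) ⬝ᵥ x : ℂ) from rfl,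
        Complex.mul_conj]
      simp [Complex.normSq_eq_norm_sq]
    have hq2 : star x ⬝ᵥ (B - W) *ᵥ x
        = ((sr - ‖(star v ⬝ᵥ x : ℂ)‖ ^ 2 : ℝ) : ℂ) := by
      rw [sub_mulVec, dotProduct_sub, hWx, hsre]
      push_cast
      ring
    rw [hq2]
    have hfin : (0 : ℝ) < sr - ‖(star v ⬝ᵥ x : ℂ)‖ ^ 2 := by nlinarith
    exact_mod_cast Complex.real_lt_real.mpr hfin
  -- relating the shifted potential matrix to B - W
  have hsub : (((a + δ : ℝ) : ℂ) • (1 : Matrix (Fin m) (Fin m) ℂ)) - (A + W) = B - W := by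
    rw [hBdef, sub_add_eq_sub_sub]
  -- Sherman--Morrison
  have hcne : ((1 - αr : ℝ) : ℂ) ≠ 0 := Complex.ofReal_ne_zero.mpr hcr0.ne'
  have e1 : B⁻¹ * W = vecMulVec (B⁻¹ *ᵥ v) (star v) := by
    rw [hWdef, BarrierAux.mul_vecMulVec]
  have e2 : W * (B⁻¹ * W) = ((αr : ℝ) : ℂ) • W := by
    rw [e1, hWdef, BarrierAux.mul_vecMulVec, BarrierAux.vecMulVec_mulVec, hαre,
        BarrierAux.vecMulVec_smul_left]
  have hrinv : (B - W) * (B⁻¹ + ((1 - αr : ℝ) : ℂ)⁻¹ • (B⁻¹ * W * B⁻¹)) = 1 := by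
    have hBx : B * (B⁻¹ * W * B⁻¹) = W * B⁻¹ := by
      rw [← Matrix.mul_assoc, ← Matrix.mul_assoc, hBB, Matrix.one_mul]
    have hWx2 : W * (B⁻¹ * W * B⁻¹) = ((αr : ℝ) : ℂ) • (W * B⁻¹) := by
      rw [← Matrix.mul_assoc, e2, Matrix.smul_mul]
    rw [Matrix.sub_mul, Matrix.mul_add, Matrix.mul_add, hBB, Matrix.mul_smul, Matrix.mul_smul,
      hBx, hWx2, smul_smul]
    have hco : ((1 - αr : ℝ) : ℂ)⁻¹ * ((αr : ℝ) : ℂ) = ((1 - αr : ℝ) : ℂ)⁻¹ - 1 := by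
      have h2 : (1 : ℂ) - (αr : ℂ) ≠ 0 := by push_cast at hcne ⊢; exact hcne
      push_cast
      field_simp [h2]
      ring
    rw [hco, sub_smul, one_smul]
    abel
  have hsm : (B - W)⁻¹ = B⁻¹ + ((1 - αr : ℝ) : ℂ)⁻¹ • (B⁻¹ * W * B⁻¹) :=
    Matrix.inv_eq_right_inv hrinv
  have htrW : (B⁻¹ * W * B⁻¹).trace = star v ⬝ᵥ (B⁻¹ ^ 2) *ᵥ v := by
    rw [e1, BarrierAux.vecMulVec_mul, BarrierAux.trace_vecMulVec, ← Matrix.dotProduct_mulVec, Matrix.mulVec_mulVec,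
      ← pow_two]
  have hfinal : upperPotential (a + δ) (A + W)
      = B⁻¹.trace + ((1 - αr : ℝ) : ℂ)⁻¹ * ((βr : ℝ) : ℂ) := by
    show ((((a + δ : ℝ) : ℂ) • (1 : Matrix (Fin m) (Fin m) ℂ) - (A + W))⁻¹).trace = _
    rw [hsub, hsm, Matrix.trace_add, Matrix.trace_smul, htrW, hβre, smul_eq_mul]
  have hMtr : upperPotential a A = B⁻¹.trace + ((Δr : ℝ) : ℂ) := by
    have h1 : upperPotential a A = M⁻¹.trace := rfl
    rw [h1]
    linear_combination hΔre
  have hOK : ((1 - αr : ℝ) : ℂ)⁻¹ * ((βr : ℝ) : ℂ) ≤ ((Δr : ℝ) : ℂ) := by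
    have hr : βr / (1 - αr) ≤ Δr := (div_le_iff₀ hcr0).mpr (by linarith [hkey])
    calc ((1 - αr : ℝ) : ℂ)⁻¹ * ((βr : ℝ) : ℂ) = ((βr / (1 - αr) : ℝ) : ℂ) := by
          push_cast
          ring
      _ ≤ ((Δr : ℝ) : ℂ) := Complex.real_le_real.mpr hr
  refine ⟨?_, ?_⟩
  · exact norm_lt_of_posDef (hA.add hWpsd) (by linarith) (by rw [hsub]; exact hBW)
  · rw [hfinal, hMtr]
    exact add_le_add (le_refl _) hOK
end

section
/- Let A be a positive semidefinite operator on ℂ^m with m ≥ 1, and let a < a' be real numbers with ‖A‖ < a. Then Φ^a(A) − Φ^{a'}(A) = (a'−a)·Tr((aI − A)^{-1}(a'I − A)^{-1}) and moreover Φ^a(A) − Φ^{a'}(A) > (a'−a)·Tr((a'I − A)^{-2}). -/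
open scoped ComplexOrder
open Matrix

lemma aux_posdef {m : ℕ} {A : Matrix (Fin m) (Fin m) ℂ} (hA : A.PosSemidef) {c : ℝ}
    (hc : ‖Matrix.toEuclideanCLM (𝕜 := ℂ) A‖ < c) :
    ((c : ℂ) • (1 : Matrix (Fin m) (Fin m) ℂ) - A).PosDef := by
  rw [Matrix.posDef_iff_dotProduct_mulVec]
  constructor
  · have : ((c : ℂ) • (1 : Matrix (Fin m) (Fin m) ℂ)).IsHermitian := by
      unfold Matrix.IsHermitian
      rw [conjTranspose_smul, conjTranspose_one]
      simp
    exact this.sub hA.1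
  · intro x hx
    set T := Matrix.toEuclideanCLM (𝕜 := ℂ) A
    set y : EuclideanSpace ℂ (Fin m) := (WithLp.equiv 2 _).symm x with hy
    have hy0 : y ≠ 0 := by
      intro h
      apply hx
      have := congrArg (WithLp.equiv 2 (Fin m → ℂ)) h
      simpa [hy] using this
    have hnpos : 0 < ‖y‖ := norm_pos_iff.mpr hy0
    have hinner : star x ⬝ᵥ (A *ᵥ x) = inner ℂ y (T y) := by
      rw [EuclideanSpace.inner_eq_star_dotProduct, dotProduct_comm]; rfl
    have hxx : star x ⬝ᵥ x = ((‖y‖ ^ 2 : ℝ) : ℂ) := by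
      have : (inner ℂ y y : ℂ) = ((‖y‖ : ℂ)) ^ 2 := inner_self_eq_norm_sq_to_K y
      rw [show star x ⬝ᵥ x = inner ℂ y y by
        rw [EuclideanSpace.inner_eq_star_dotProduct, dotProduct_comm]; rfl, this]
      push_cast; ring
    obtain ⟨hre, him⟩ := Complex.nonneg_iff.mp (hA.dotProduct_mulVec_nonneg x)
    have hbound : (star x ⬝ᵥ (A *ᵥ x)).re ≤ ‖T‖ * ‖y‖ ^ 2 := by
      calc (star x ⬝ᵥ (A *ᵥ x)).re ≤ ‖(star x ⬝ᵥ (A *ᵥ x))‖ := Complex.re_le_norm _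
        _ = ‖(inner ℂ y (T y) : ℂ)‖ := by rw [hinner]
        _ ≤ ‖y‖ * ‖T y‖ := norm_inner_le_norm y (T y)
        _ ≤ ‖y‖ * (‖T‖ * ‖y‖) := by
            exact mul_le_mul_of_nonneg_left (T.le_opNorm y) (norm_nonneg y)
        _ = ‖T‖ * ‖y‖ ^ 2 := by ring
    have hval : star x ⬝ᵥ (((c : ℂ) • (1 : Matrix (Fin m) (Fin m) ℂ) - A) *ᵥ x)
        = (c : ℂ) * (star x ⬝ᵥ x) - star x ⬝ᵥ (A *ᵥ x) := by
      rw [sub_mulVec, dotProduct_sub, smul_mulVec, one_mulVec, dotProduct_smul,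
        smul_eq_mul]
    rw [hval, hxx]
    rw [Complex.lt_def]
    constructor
    · simp only [Complex.zero_re, Complex.sub_re, Complex.mul_re, Complex.ofReal_re,
        Complex.ofReal_im, Complex.zero_im, mul_zero, zero_mul, sub_zero]
      nlinarith [mul_lt_mul_of_pos_right hc (pow_pos hnpos 2), hbound]
    · simp only [Complex.zero_im, Complex.sub_im, Complex.mul_im, Complex.ofReal_re,
        Complex.ofReal_im, ← him]
      ring


lemma aux_trace_pos {m : ℕ} (hm : 1 ≤ m) {M : Matrix (Fin m) (Fin m) ℂ} (hM : M.PosDef) :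
    0 < M.trace := by
  haveI : Nonempty (Fin m) := Fin.pos_iff_nonempty.mp hm
  have hdiag : ∀ i, 0 < M i i := fun i => by
    simpa [dotProduct, Pi.single_apply, apply_ite] using hM.dotProduct_mulVec_pos (x := Pi.single i 1) (by
      intro h
      have := congrFun h i
      simp at this)
  exact Finset.sum_pos (fun i _ => hdiag i) Finset.univ_nonempty

lemma aux_inv_sub {n : Type*} [Fintype n] [DecidableEq n] {B B' : Matrix n n ℂ}
    (hB : IsUnit B.det) (hB' : IsUnit B'.det) (d : ℂ) (h : B' - B = d • 1) :
    B⁻¹ - B'⁻¹ = d • (B⁻¹ * B'⁻¹) := by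
  have h1 : B⁻¹ * (B' - B) * B'⁻¹ = B⁻¹ - B'⁻¹ := by
    rw [Matrix.mul_sub, Matrix.sub_mul, Matrix.mul_assoc, Matrix.mul_assoc,
      Matrix.mul_nonsing_inv _ hB', Matrix.mul_one, ← Matrix.mul_assoc,
      Matrix.nonsing_inv_mul _ hB, Matrix.one_mul]
  rw [← h1, h, Matrix.mul_smul, Matrix.smul_mul, Matrix.mul_one]

lemma aux_posdef_conj {n : Type*} [Fintype n] [DecidableEq n] {M B : Matrix n n ℂ}
    (hM : M.PosDef) (hB : IsUnit B.det) : (Bᴴ * M * B).PosDef := by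
  refine Matrix.PosDef.of_dotProduct_mulVec_pos (Matrix.isHermitian_conjTranspose_mul_mul B hM.1) fun x hx => ?_
  have hBx : B *ᵥ x ≠ 0 := by
    intro h
    apply hx
    have : B⁻¹ *ᵥ (B *ᵥ x) = x := by
      rw [Matrix.mulVec_mulVec, Matrix.nonsing_inv_mul _ hB, Matrix.one_mulVec]
    rw [← this, h, Matrix.mulVec_zero]
  simpa only [star_mulVec, Matrix.dotProduct_mulVec, Matrix.vecMul_vecMul] using
    hM.dotProduct_mulVec_pos hBx

/-- For `A ⪰ 0` on `ℂ^m` (`m ≥ 1`) and `a < a'` with `‖A‖ < a`: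
`Φ^a(A) - Φ^{a'}(A) = (a'-a)·Tr((aI-A)⁻¹(a'I-A)⁻¹)`, and moreover
`Φ^a(A) - Φ^{a'}(A) > (a'-a)·Tr((a'I-A)⁻²)`. -/
theorem stmt12 {m : ℕ} (hm : 1 ≤ m) (A : Matrix (Fin m) (Fin m) ℂ) (hA : A.PosSemidef)
    (a a' : ℝ) (haa' : a < a')
    (hnorm : ‖Matrix.toEuclideanCLM (𝕜 := ℂ) A‖ < a) :
    upperPotential a A - upperPotential a' A =
      ((a' - a : ℝ) : ℂ) *
        Matrix.trace (((a : ℂ) • (1 : Matrix (Fin m) (Fin m) ℂ) - A)⁻¹ *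
          ((a' : ℂ) • (1 : Matrix (Fin m) (Fin m) ℂ) - A)⁻¹) ∧
    ((a' - a : ℝ) : ℂ) *
        Matrix.trace ((((a' : ℂ) • (1 : Matrix (Fin m) (Fin m) ℂ) - A)⁻¹) ^ 2) <
      upperPotential a A - upperPotential a' A := by
  set B := (a : ℂ) • (1 : Matrix (Fin m) (Fin m) ℂ) - A with hBdef
  set B' := (a' : ℂ) • (1 : Matrix (Fin m) (Fin m) ℂ) - A with hB'def
  set d : ℂ := ((a' - a : ℝ) : ℂ) with hddef
  have hd : 0 < d := by
    rw [hddef]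
    exact_mod_cast Complex.zero_lt_real.mpr (by linarith)
  have hB : B.PosDef := aux_posdef hA hnorm
  have hB' : B'.PosDef := aux_posdef hA (hnorm.trans haa')
  have hBu : IsUnit B.det := isUnit_iff_ne_zero.mpr hB.det_pos.ne'
  have hB'u : IsUnit B'.det := isUnit_iff_ne_zero.mpr hB'.det_pos.ne'
  have hdiff : B' - B = d • 1 := by
    rw [hBdef, hB'def, hddef]
    push_cast
    rw [sub_sub_sub_cancel_right, ← sub_smul]
  have key : B⁻¹ - B'⁻¹ = d • (B⁻¹ * B'⁻¹) := aux_inv_sub hBu hB'u d hdiff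
  have part1 : upperPotential a A - upperPotential a' A = d * (B⁻¹ * B'⁻¹).trace := by
    rw [upperPotential, upperPotential, ← hBdef, ← hB'def, ← Matrix.trace_sub, key,
      Matrix.trace_smul, smul_eq_mul]
  refine ⟨part1, ?_⟩
  rw [part1]
  rw [← sub_pos, ← mul_sub, ← Matrix.trace_sub]
  have h2 : B⁻¹ * B'⁻¹ - (B'⁻¹) ^ 2 = d • (B⁻¹ * B'⁻¹ * B'⁻¹) := by
    rw [sq, ← Matrix.sub_mul, key, Matrix.smul_mul, Matrix.mul_assoc]
  rw [h2, Matrix.trace_smul, smul_eq_mul]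
  -- positivity of the trace
  have hcomm : B * B' = B' * B := by
    have hc : Commute B B' := by
      rw [hBdef, hB'def]
      exact ((Commute.one_left _).smul_left _).sub_left
        (((Commute.one_right A).smul_right _).sub_right (Commute.refl A))
    exact hc
  have hinvcomm : B⁻¹ * B'⁻¹ = B'⁻¹ * B⁻¹ := by
    rw [← Matrix.mul_inv_rev, ← Matrix.mul_inv_rev, hcomm]
  have hHerm : (B'⁻¹)ᴴ = B'⁻¹ := (hB'.inv).1
  have hD : (B⁻¹ * B'⁻¹ * B'⁻¹).PosDef := by
    have : B⁻¹ * B'⁻¹ * B'⁻¹ = (B'⁻¹)ᴴ * B⁻¹ * B'⁻¹ := by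
      rw [hHerm, ← hinvcomm]
    rw [this]
    exact aux_posdef_conj hB.inv (isUnit_iff_ne_zero.mpr hB'.inv.det_pos.ne')
  exact mul_pos hd (mul_pos hd (aux_trace_pos hm hD))
end

section
/- Let A be a positive semidefinite operator on ℂ^m with m ≥ 1, and let a' > 0 satisfy ‖A‖ < a' and ‖A‖ < 1. Then Tr((a'I − A)^{-1}(I − A)) ≤ (1/m)·Tr((a'I − A)^{-1})·Tr(I − A). -/
open scoped ComplexOrder

/-- If `A ⪰ 0` on `ℂ^m` (`m ≥ 1`), `a' > 0`, `‖A‖ < a'` and `‖A‖ < 1`, then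
`Tr((a'I - A)⁻¹ (I - A)) ≤ (1/m) · Tr((a'I - A)⁻¹) · Tr(I - A)`. -/
theorem stmt13 {m : ℕ} (hm : 1 ≤ m) (A : Matrix (Fin m) (Fin m) ℂ) (hA : A.PosSemidef)
    (a' : ℝ) (ha' : 0 < a')
    (hnorm : ‖Matrix.toEuclideanCLM (𝕜 := ℂ) A‖ < a')
    (hnorm1 : ‖Matrix.toEuclideanCLM (𝕜 := ℂ) A‖ < 1) :
    Matrix.trace (((a' : ℂ) • (1 : Matrix (Fin m) (Fin m) ℂ) - A)⁻¹ * (1 - A)) ≤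
      (1 / (m : ℂ)) * Matrix.trace (((a' : ℂ) • (1 : Matrix (Fin m) (Fin m) ℂ) - A)⁻¹) *
        Matrix.trace (1 - A) := by
  have : Nonempty (Fin m) := ⟨⟨0, hm⟩⟩
  have h := hA.1
  set μ := h.eigenvalues with hμdef
  set U : Matrix (Fin m) (Fin m) ℂ := (h.eigenvectorUnitary : Matrix (Fin m) (Fin m) ℂ) with hUdef
  have hUU : U * star U = 1 := (Matrix.mem_unitaryGroup_iff).mp (h.eigenvectorUnitary).2
  have hUsU : star U * U = 1 := (Matrix.mem_unitaryGroup_iff').mp (h.eigenvectorUnitary).2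
  -- eigenvalue bounds
  have hle : ∀ i, μ i ≤ ‖Matrix.toEuclideanCLM (𝕜 := ℂ) A‖ := by
    intro i
    have h1 : (μ i : ℂ) ∈ spectrum ℂ A :=
      spectrum.algebraMap_mem ℂ (h.eigenvalues_mem_spectrum_real i)
    rw [← AlgEquiv.spectrum_eq (Matrix.toEuclideanCLM (𝕜 := ℂ) (n := Fin m)) A] at h1
    have h2 := spectrum.norm_le_norm_of_mem h1
    simp only [Complex.norm_real] at h2
    exact le_trans (le_abs_self _) (by simpa using h2)
  have hμa : ∀ i, μ i < a' := fun i => lt_of_le_of_lt (hle i) hnorm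
  have hμ1 : ∀ i, μ i < 1 := fun i => lt_of_le_of_lt (hle i) hnorm1
  -- general conjugation lemmas
  have mulconj : ∀ d e : Fin m → ℂ,
      (U * Matrix.diagonal d * star U) * (U * Matrix.diagonal e * star U)
        = U * Matrix.diagonal (fun i => d i * e i) * star U := by
    intro d e
    simp only [Matrix.mul_assoc]
    rw [← Matrix.mul_assoc (star U) U, hUsU, Matrix.one_mul,
      ← Matrix.mul_assoc (Matrix.diagonal d), Matrix.diagonal_mul_diagonal]
  have traceconj : ∀ d : Fin m → ℂ,
      Matrix.trace (U * Matrix.diagonal d * star U) = ∑ i, d i := by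
    intro d
    rw [Matrix.trace_mul_comm, ← Matrix.mul_assoc, hUsU, Matrix.one_mul, Matrix.trace_diagonal]
  -- spectral decomposition
  have hAeq : A = U * Matrix.diagonal (fun i => (μ i : ℂ)) * star U := by
    simpa [Function.comp_def] using h.spectral_theorem
  have key : ∀ c : ℂ, c • (1 : Matrix (Fin m) (Fin m) ℂ) - A
      = U * Matrix.diagonal (fun i => c - (μ i : ℂ)) * star U := by
    intro c
    have hd : Matrix.diagonal (fun i => c - (μ i : ℂ))
        = c • (1 : Matrix (Fin m) (Fin m) ℂ) - Matrix.diagonal (fun i => (μ i : ℂ)) := by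
      rw [Matrix.smul_one_eq_diagonal, ← Matrix.diagonal_sub]
    rw [hd, Matrix.mul_sub, Matrix.sub_mul, ← hAeq, Matrix.mul_smul, Matrix.mul_one,
      Matrix.smul_mul, hUU]
  have hne : ∀ i, ((a' : ℂ) - (μ i : ℂ)) ≠ 0 := by
    intro i
    have : (0:ℝ) < a' - μ i := by linarith [hμa i]
    simp only [← Complex.ofReal_sub, ne_eq, Complex.ofReal_eq_zero]
    linarith
  have hainv : ((a' : ℂ) • (1 : Matrix (Fin m) (Fin m) ℂ) - A)⁻¹
      = U * Matrix.diagonal (fun i => ((a' : ℂ) - (μ i : ℂ))⁻¹) * star U := by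
    apply Matrix.inv_eq_right_inv
    rw [key, mulconj]
    have : (fun i => ((a' : ℂ) - (μ i : ℂ)) * ((a' : ℂ) - (μ i : ℂ))⁻¹) = fun _ => (1:ℂ) :=
      funext fun i => mul_inv_cancel₀ (hne i)
    rw [this, Matrix.diagonal_one, Matrix.mul_one, hUU]
  have key1 : (1 : Matrix (Fin m) (Fin m) ℂ) - A
      = U * Matrix.diagonal (fun i => 1 - (μ i : ℂ)) * star U := by
    simpa using key 1
  -- trace computations
  have t1 : Matrix.trace (((a' : ℂ) • (1 : Matrix (Fin m) (Fin m) ℂ) - A)⁻¹ * (1 - A))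
      = ((∑ i, (a' - μ i)⁻¹ * (1 - μ i) : ℝ) : ℂ) := by
    rw [hainv, key1, mulconj, traceconj]
    push_cast
    ring
  have t2 : Matrix.trace (((a' : ℂ) • (1 : Matrix (Fin m) (Fin m) ℂ) - A)⁻¹)
      = ((∑ i, (a' - μ i)⁻¹ : ℝ) : ℂ) := by
    rw [hainv, traceconj]
    push_cast
    ring
  have t3 : Matrix.trace ((1 : Matrix (Fin m) (Fin m) ℂ) - A)
      = ((∑ i, (1 - μ i) : ℝ) : ℂ) := by
    rw [key1, traceconj]
    push_cast
    ring
  -- real Chebyshev inequality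
  have anti : AntivaryOn (fun i => (a' - μ i)⁻¹) (fun i => 1 - μ i) (Finset.univ : Finset (Fin m)) := by
    intro i _ j _ hg
    simp only at hg
    have h1 : (0:ℝ) < a' - μ i := by linarith [hμa i]
    have h2 : a' - μ i ≤ a' - μ j := by linarith
    exact inv_anti₀ h1 h2
  have cheb := anti.card_mul_sum_le_sum_mul_sum
  simp only [Finset.card_univ, Fintype.card_fin] at cheb
  have hm0 : (0:ℝ) < (m:ℝ) := by exact_mod_cast hm
  have main : ∑ i, (a' - μ i)⁻¹ * (1 - μ i)
      ≤ 1 / (m:ℝ) * (∑ i, (a' - μ i)⁻¹) * (∑ i, (1 - μ i)) := by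
    rw [div_mul_eq_mul_div, div_mul_eq_mul_div, le_div_iff₀ hm0]
    calc (∑ i, (a' - μ i)⁻¹ * (1 - μ i)) * m = (m:ℝ) * ∑ i, (a' - μ i)⁻¹ * (1 - μ i) := by ring
    _ ≤ (∑ i, (a' - μ i)⁻¹) * (∑ i, (1 - μ i)) := cheb
    _ = 1 * (∑ i, (a' - μ i)⁻¹) * (∑ i, (1 - μ i)) := by ring
  rw [t1, t2, t3, show (1 / (m:ℂ)) = (((1/(m:ℝ) : ℝ)) : ℂ) by push_cast; ring,
    ← Complex.ofReal_mul, ← Complex.ofReal_mul, Complex.real_le_real]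
  exact main
end

section
/- Let A be a positive semidefinite operator on ℂ^m with m ≥ 1, and let a' > 0 satisfy ‖A‖ < a' and ‖A‖ < 1. Then Tr((a'I − A)^{-2}(I − A)) ≤ (1/m)·Tr((a'I − A)^{-2})·Tr(I − A). -/
open scoped ComplexOrder

/-- If `A ⪰ 0` on `ℂ^m` (`m ≥ 1`), `a' > 0`, `‖A‖ < a'` and `‖A‖ < 1`, then
`Tr((a'I - A)⁻² (I - A)) ≤ (1/m) · Tr((a'I - A)⁻²) · Tr(I - A)`. -/
theorem stmt14 {m : ℕ} (hm : 1 ≤ m) (A : Matrix (Fin m) (Fin m) ℂ) (hA : A.PosSemidef)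
    (a' : ℝ) (ha' : 0 < a')
    (hnorm : ‖Matrix.toEuclideanCLM (𝕜 := ℂ) A‖ < a')
    (hnorm1 : ‖Matrix.toEuclideanCLM (𝕜 := ℂ) A‖ < 1) :
    Matrix.trace ((((a' : ℂ) • (1 : Matrix (Fin m) (Fin m) ℂ) - A)⁻¹) ^ 2 * (1 - A)) ≤
      (1 / (m : ℂ)) *
        Matrix.trace ((((a' : ℂ) • (1 : Matrix (Fin m) (Fin m) ℂ) - A)⁻¹) ^ 2) *
        Matrix.trace (1 - A) := by
  have h := hA.1
  -- eigenvalue bounds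
  have heig_le : ∀ i, h.eigenvalues i ≤ ‖Matrix.toEuclideanCLM (𝕜 := ℂ) A‖ := by
    intro i
    set v := h.eigenvectorBasis i with hv
    have hnv : ‖v‖ = 1 := h.eigenvectorBasis.orthonormal.1 i
    have hAv : Matrix.toEuclideanCLM (𝕜 := ℂ) A v = (h.eigenvalues i : ℂ) • v := by
      apply (WithLp.equiv 2 _).injective
      show WithLp.ofLp (Matrix.toEuclideanCLM (𝕜 := ℂ) A v) = WithLp.ofLp ((h.eigenvalues i : ℂ) • v)
      rw [Matrix.ofLp_toEuclideanCLM]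
      ext j
      have := congrFun (h.mulVec_eigenvectorBasis i) j
      simpa [Complex.real_smul] using this
    have h1 : ‖Matrix.toEuclideanCLM (𝕜 := ℂ) A v‖ ≤ ‖Matrix.toEuclideanCLM (𝕜 := ℂ) A‖ * ‖v‖ :=
      (Matrix.toEuclideanCLM (𝕜 := ℂ) A).le_opNorm v
    rw [hAv, norm_smul, hnv, mul_one, mul_one] at h1
    calc h.eigenvalues i ≤ |h.eigenvalues i| := le_abs_self _
      _ = ‖(h.eigenvalues i : ℂ)‖ := by simp
      _ ≤ _ := h1
  have heig_lt_a' : ∀ i, h.eigenvalues i < a' := fun i => (heig_le i).trans_lt hnorm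
  have heig_lt_1 : ∀ i, h.eigenvalues i < 1 := fun i => (heig_le i).trans_lt hnorm1
  have heig_nn : ∀ i, 0 ≤ h.eigenvalues i := hA.eigenvalues_nonneg
  set U : Matrix (Fin m) (Fin m) ℂ := (h.eigenvectorUnitary : Matrix (Fin m) (Fin m) ℂ) with hU
  have hUU : U * star U = 1 := (Matrix.mem_unitaryGroup_iff).mp h.eigenvectorUnitary.2
  have hUU' : star U * U = 1 := (Matrix.mem_unitaryGroup_iff').mp h.eigenvectorUnitary.2
  set C : (Fin m → ℂ) → Matrix (Fin m) (Fin m) ℂ := fun d => U * Matrix.diagonal d * star U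
    with hC
  have hCmul : ∀ d e, C d * C e = C (d * e) := by
    intro d e
    simp only [hC, Matrix.mul_assoc]
    rw [← Matrix.mul_assoc (star U) U, hUU', Matrix.one_mul,
      ← Matrix.mul_assoc (Matrix.diagonal d), Matrix.diagonal_mul_diagonal]
    rfl
  have hCtr : ∀ d, (C d).trace = ∑ i, d i := by
    intro d
    rw [hC, Matrix.trace_mul_cycle, hUU', Matrix.one_mul, Matrix.trace_diagonal]
  have hCone : C 1 = 1 := by
    show U * Matrix.diagonal 1 * star U = 1
    have h1 : Matrix.diagonal (1 : Fin m → ℂ) = 1 := by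
      ext i j
      by_cases hij : i = j <;> simp [Matrix.diagonal_apply, hij, Matrix.one_apply]
    rw [h1, Matrix.mul_one, hUU]
  have hCA : A = C (fun i => (h.eigenvalues i : ℂ)) := by
    exact h.spectral_theorem
  have hCsub : ∀ d e, C d - C e = C (d - e) := by
    intro d e
    simp only [hC, ← Matrix.sub_mul, ← Matrix.mul_sub, Matrix.diagonal_sub]
    rfl
  have hCsmul : ∀ (a : ℂ) d, a • C d = C (a • d) := by
    intro a d
    simp only [hC, Matrix.smul_mul, Matrix.mul_smul, Matrix.diagonal_smul]
  have hsmul1 : (a' : ℂ) • (1 : Matrix (Fin m) (Fin m) ℂ) = C (fun _ => (a' : ℂ)) := by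
    rw [← hCone, hCsmul]
    have : ((a' : ℂ) • (1 : Fin m → ℂ)) = fun _ => (a' : ℂ) := by
      funext i; simp
    rw [this]
  -- key decompositions
  have hkey := hCsub (fun _ => (a' : ℂ)) (fun i => (h.eigenvalues i : ℂ))
  rw [← hCA, ← hsmul1] at hkey
  have h1A := hCsub 1 (fun i => (h.eigenvalues i : ℂ))
  rw [← hCA, hCone] at h1A
  set d : Fin m → ℂ := (fun _ => (a' : ℂ)) - (fun i => (h.eigenvalues i : ℂ)) with hd
  have hdne : ∀ i, d i ≠ 0 := by
    intro i
    have : (0 : ℝ) < a' - h.eigenvalues i := by linarith [heig_lt_a' i]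
    simp only [hd, Pi.sub_apply]
    rw [← Complex.ofReal_sub]
    exact_mod_cast this.ne'
  have hinv : (C d)⁻¹ = C (fun i => (d i)⁻¹) := by
    apply Matrix.inv_eq_right_inv
    rw [hCmul, ← hCone]
    have : (d * fun i => (d i)⁻¹) = 1 := by
      funext i; exact mul_inv_cancel₀ (hdne i)
    rw [this]
  -- compute the three traces
  have htrace1 : Matrix.trace ((((a' : ℂ) • (1 : Matrix (Fin m) (Fin m) ℂ) - A)⁻¹) ^ 2 * (1 - A))
      = ∑ i, (d i)⁻¹ * (d i)⁻¹ * (1 - (h.eigenvalues i : ℂ)) := by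
    rw [hkey, hinv, sq, hCmul, h1A, hCmul, hCtr]
    rfl
  have htrace2 : Matrix.trace ((((a' : ℂ) • (1 : Matrix (Fin m) (Fin m) ℂ) - A)⁻¹) ^ 2)
      = ∑ i, (d i)⁻¹ * (d i)⁻¹ := by
    rw [hkey, hinv, sq, hCmul, hCtr]
    rfl
  have htrace3 : Matrix.trace ((1 : Matrix (Fin m) (Fin m) ℂ) - A)
      = ∑ i, (1 - (h.eigenvalues i : ℂ)) := by
    rw [h1A, hCtr]
    rfl
  rw [htrace1, htrace2, htrace3]
  -- pass to real numbers
  set f : Fin m → ℝ := fun i => ((a' - h.eigenvalues i)⁻¹) ^ 2 with hf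
  set g : Fin m → ℝ := fun i => 1 - h.eigenvalues i with hg
  have hdre : ∀ i, d i = ((a' - h.eigenvalues i : ℝ) : ℂ) := by
    intro i; simp [hd]
  have e1 : ∑ i, (d i)⁻¹ * (d i)⁻¹ * (1 - (h.eigenvalues i : ℂ)) = ((∑ i, f i * g i : ℝ) : ℂ) := by
    push_cast
    refine Finset.sum_congr rfl fun i _ => ?_
    rw [hdre i, hf, hg]
    push_cast
    ring
  have e2 : ∑ i, (d i)⁻¹ * (d i)⁻¹ = ((∑ i, f i : ℝ) : ℂ) := by
    push_cast
    refine Finset.sum_congr rfl fun i _ => ?_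
    rw [hdre i, hf]
    push_cast
    ring
  have e3 : ∑ i, (1 - (h.eigenvalues i : ℂ)) = ((∑ i, g i : ℝ) : ℂ) := by
    rw [Complex.ofReal_sum]
    exact Finset.sum_congr rfl fun i _ => by simp [hg]
  rw [e1, e2, e3]
  have : (1 / (m : ℂ)) = ((1 / (m : ℝ) : ℝ) : ℂ) := by push_cast; ring
  rw [this, ← Complex.ofReal_mul, ← Complex.ofReal_mul, Complex.real_le_real]
  -- real Chebyshev inequality
  have hanti : Antivary f g := by
    intro i j hij
    have hlam : h.eigenvalues j < h.eigenvalues i := by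
      simp only [hg, sub_lt_sub_iff_left] at hij
      exact hij
    have hpi : (0 : ℝ) < a' - h.eigenvalues i := by linarith [heig_lt_a' i]
    have hpj : (0 : ℝ) < a' - h.eigenvalues j := by linarith [heig_lt_a' j]
    simp only [hf]
    have hle : (a' - h.eigenvalues j)⁻¹ ≤ (a' - h.eigenvalues i)⁻¹ :=
      inv_anti₀ hpi (by linarith)
    exact pow_le_pow_left₀ (inv_nonneg.mpr hpj.le) hle 2
  have cheb := hanti.card_mul_sum_le_sum_mul_sum
  rw [Fintype.card_fin] at cheb
  have hm0 : (0 : ℝ) < m := by exact_mod_cast hm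
  rw [div_mul_eq_mul_div, div_mul_eq_mul_div, one_mul, le_div_iff₀ hm0, mul_comm]
  exact cheb
end
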